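/- arXiv:2603.05567 — 4 statements merged into one kernel-verified Lean document; each statement's English description precedes it below -/
import Mathlib

section
/- Let n, m ≥ 1, let P : Fin m → E be pocket coordinates, X : Fin n → E ligand coordinates, N : Fin n → Finset (Fin n ⊕ Fin m) an arbitrary neighbor assignment, and φ : ℝ → ℝ an arbitrary function. Then for every rigid motion g : E ≃ᵃⁱ[ℝ] E, applying g jointly to the pocket and ligand coordinates commutes with the coordinate update: for every u, F(g ∘ P, g ∘ X) u = g (F(P, X) u). (This is the SE(3)-equivariance of the EGNN-style coordinate update of Eq. (7): the scalar coefficient depends only on interatomic distances, which are preserved by g, and the relative displacement vectors transform by the linear part of g.) -/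
noncomputable section

open Finset

/-- 3-dimensional Euclidean space. -/
abbrev E : Type := EuclideanSpace ℝ (Fin 3)

/-- Positions of all atoms: ligand atoms (left) and pocket atoms (right). -/
def pos {n m : ℕ} (P : Fin m → E) (X : Fin n → E) : Fin n ⊕ Fin m → E :=
  Sum.elim X P

/-- The pocket-conditioned EGNN-style coordinate update (Eq. (7)):
`F(P, X) u = X u + ∑_{w ∈ N u} (φ (dist (X u) (pos w)) / (dist (X u) (pos w))^2) • (X u − pos w)`,
with the convention that division by zero equals zero. -/
def coordUpdate {n m : ℕ} (P : Fin m → E) (X : Fin n → E)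
    (N : Fin n → Finset (Fin n ⊕ Fin m)) (φ : ℝ → ℝ) (u : Fin n) : E :=
  X u + ∑ w ∈ N u,
    (φ (dist (X u) (pos P X w)) / (dist (X u) (pos P X w)) ^ 2) • (X u - pos P X w)

/-- SE(3)-equivariance of the coordinate update: applying a rigid motion `g` jointly to
pocket and ligand coordinates commutes with the update. -/
theorem coordUpdate_equivariant {n m : ℕ} (hn : 1 ≤ n) (hm : 1 ≤ m)
    (P : Fin m → E) (X : Fin n → E) (N : Fin n → Finset (Fin n ⊕ Fin m))
    (φ : ℝ → ℝ) (g : E ≃ᵃⁱ[ℝ] E) (u : Fin n) :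
    coordUpdate (g ∘ P) (g ∘ X) N φ u = g (coordUpdate P X N φ u) := by
  have hpos : ∀ w, pos (g ∘ P) (g ∘ X) w = g (pos P X w) := by
    intro w; cases w <;> rfl
  unfold coordUpdate
  have key : g (X u + ∑ w ∈ N u,
      (φ (dist (X u) (pos P X w)) / (dist (X u) (pos P X w)) ^ 2) • (X u - pos P X w))
      = g (X u) + g.linearIsometryEquiv (∑ w ∈ N u,
      (φ (dist (X u) (pos P X w)) / (dist (X u) (pos P X w)) ^ 2) • (X u - pos P X w)) := by
    rw [add_comm, add_comm (g (X u))]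
    exact g.map_vadd _ _
  rw [key]
  congr 1
  rw [map_sum]
  refine Finset.sum_congr rfl fun w _ => ?_
  rw [hpos, map_smul]
  congr 1
  · rw [Function.comp_apply, g.dist_map]
  · have : (g : E → E) (X u) - g (pos P X w) = g.linearIsometryEquiv (X u - pos P X w) := by
      simpa using (g.map_vsub (X u) (pos P X w)).symm
    simp [Function.comp_apply, this]
end
end

section
/- Let n ≥ 1, X₁, X₂ : Fin n → E, and ψ : ℝ → ℝ → ℝ. Then the dual coordinate update is equivariant under independent rigid motions of the two complexes: for all rigid motions g₁, g₂ : E ≃ᵃⁱ[ℝ] E and every u, F₁(g₁ ∘ X₁, g₂ ∘ X₂) u = g₁ (F₁(X₁, X₂) u) and F₂(g₁ ∘ X₁, g₂ ∘ X₂) u = g₂ (F₂(X₁, X₂) u). (Each pairwise distance d_k is computed within the k-th pose alone and is therefore preserved when an isometry is applied to that pose, so the scalar coefficients are invariant under independent rigid motions and the displacement vectors transform by the linear part of the corresponding motion.) -/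
noncomputable section

open Finset

/-- Symmetric sum feature `s u w = d₁ u w + d₂ u w`. -/
def sFeat {n : ℕ} (X₁ X₂ : Fin n → E) (u w : Fin n) : ℝ :=
  dist (X₁ u) (X₁ w) + dist (X₂ u) (X₂ w)

/-- Symmetric difference feature `δ u w = |d₁ u w − d₂ u w|`. -/
def δFeat {n : ℕ} (X₁ X₂ : Fin n → E) (u w : Fin n) : ℝ :=
  |dist (X₁ u) (X₁ w) - dist (X₂ u) (X₂ w)|

/-- The dual coordinate update for the first pose (division by zero is zero). -/
def F₁ {n : ℕ} (ψ : ℝ → ℝ → ℝ) (X₁ X₂ : Fin n → E) (u : Fin n) : E :=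
  X₁ u + ∑ w ∈ Finset.univ.erase u,
    (ψ (sFeat X₁ X₂ u w) (δFeat X₁ X₂ u w) / (dist (X₁ u) (X₁ w)) ^ 2) • (X₁ u - X₁ w)

/-- The dual coordinate update for the second pose (division by zero is zero). -/
def F₂ {n : ℕ} (ψ : ℝ → ℝ → ℝ) (X₁ X₂ : Fin n → E) (u : Fin n) : E :=
  X₂ u + ∑ w ∈ Finset.univ.erase u,
    (ψ (sFeat X₁ X₂ u w) (δFeat X₁ X₂ u w) / (dist (X₂ u) (X₂ w)) ^ 2) • (X₂ u - X₂ w)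


/-- Equivariance of the dual coordinate update under independent rigid motions of the two
complexes: for all rigid motions `g₁, g₂` and every `u`,
`F₁(g₁ ∘ X₁, g₂ ∘ X₂) u = g₁ (F₁(X₁, X₂) u)` and `F₂(g₁ ∘ X₁, g₂ ∘ X₂) u = g₂ (F₂(X₁, X₂) u)`. -/
theorem dualCoordUpdate_se3_equivariant {n : ℕ} (hn : 1 ≤ n)
    (X₁ X₂ : Fin n → E) (ψ : ℝ → ℝ → ℝ) (g₁ g₂ : E ≃ᵃⁱ[ℝ] E) (u : Fin n) :
    F₁ ψ (g₁ ∘ X₁) (g₂ ∘ X₂) u = g₁ (F₁ ψ X₁ X₂ u) ∧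
    F₂ ψ (g₁ ∘ X₁) (g₂ ∘ X₂) u = g₂ (F₂ ψ X₁ X₂ u) := by

  have key : ∀ (g : E ≃ᵃⁱ[ℝ] E) (Y Z : Fin n → E) (c : Fin n → ℝ),
      (g ∘ Y) u + ∑ w ∈ Finset.univ.erase u, c w • ((g ∘ Y) u - (g ∘ Y) w)
        = g (Y u + ∑ w ∈ Finset.univ.erase u, c w • (Y u - Y w)) := by
    intro g Y Z c
    have hsub : ∀ x y : E, g x - g y = g.linearIsometryEquiv (x - y) := by
      intro x y
      have := g.map_vadd y (x - y)
      simp only [vadd_eq_add] at this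
      rw [sub_add_cancel] at this
      rw [this]; abel
    have hadd : ∀ (x v : E), g (x + v) = g x + g.linearIsometryEquiv v := by
      intro x v
      have := g.map_vadd x v
      simpa [vadd_eq_add, add_comm] using this
    rw [hadd, map_sum]
    simp only [Function.comp_apply, hsub, map_smul]
  constructor
  · have hd1 : ∀ v w, dist ((g₁ ∘ X₁) v) ((g₁ ∘ X₁) w) = dist (X₁ v) (X₁ w) := by
      intro v w; simp [Function.comp_apply]
    simp only [F₁, sFeat, δFeat, hd1,
      show ∀ v w, dist ((g₂ ∘ X₂) v) ((g₂ ∘ X₂) w) = dist (X₂ v) (X₂ w) from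
        fun v w => by simp [Function.comp_apply]]
    exact key g₁ X₁ X₂ _
  · have hd2 : ∀ v w, dist ((g₂ ∘ X₂) v) ((g₂ ∘ X₂) w) = dist (X₂ v) (X₂ w) := by
      intro v w; simp [Function.comp_apply]
    simp only [F₂, sFeat, δFeat, hd2,
      show ∀ v w, dist ((g₁ ∘ X₁) v) ((g₁ ∘ X₁) w) = dist (X₁ v) (X₁ w) from
        fun v w => by simp [Function.comp_apply]]
    exact key g₂ X₂ X₁ _
end
end

section
/- Let x : ℝ and let a, b : ℝ≥0 with a ≤ 1 and b ≤ 1. Then composing two Gaussian forward-diffusion transitions yields the Gaussian forward marginal with multiplied signal coefficients: (gaussianReal (Real.sqrt a * x) (1 − a)).bind (fun y => gaussianReal (Real.sqrt b * y) (1 − b)) = gaussianReal (Real.sqrt (a * b) * x) (1 − a * b), where 1 − a, 1 − b, 1 − a*b are the (ℝ≥0) variances. -/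
open MeasureTheory ProbabilityTheory Real

open scoped NNReal ENNReal

lemma key_pointwise (m1 z y c v1 v2 : ℝ) (h1 : 0 < v1) (h2 : 0 < v2) :
    ((√(2*π*v1))⁻¹ * rexp (-(y-m1)^2/(2*v1))) * ((√(2*π*v2))⁻¹ * rexp (-(z-c*y)^2/(2*v2))) =
    ((√(2*π*(c^2*v1+v2)))⁻¹ * rexp (-(z-c*m1)^2/(2*(c^2*v1+v2)))) *
      ((√(2*π*(v1*v2/(c^2*v1+v2))))⁻¹ *
        rexp (-(y-(m1*v2+c*z*v1)/(c^2*v1+v2))^2/(2*(v1*v2/(c^2*v1+v2))))) := by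
  have hV : 0 < c^2*v1+v2 := by positivity
  have hpre : (√(2*π*v1))⁻¹ * (√(2*π*v2))⁻¹ =
      (√(2*π*(c^2*v1+v2)))⁻¹ * (√(2*π*(v1*v2/(c^2*v1+v2))))⁻¹ := by
    rw [← mul_inv, ← mul_inv, ← Real.sqrt_mul (by positivity), ← Real.sqrt_mul (by positivity)]
    congr 1
    field_simp
  have hexp : rexp (-(y-m1)^2/(2*v1)) * rexp (-(z-c*y)^2/(2*v2)) =
      rexp (-(z-c*m1)^2/(2*(c^2*v1+v2))) *
        rexp (-(y-(m1*v2+c*z*v1)/(c^2*v1+v2))^2/(2*(v1*v2/(c^2*v1+v2)))) := by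
    rw [← Real.exp_add, ← Real.exp_add]
    congr 1
    field_simp
    ring
  calc ((√(2*π*v1))⁻¹ * rexp (-(y-m1)^2/(2*v1))) * ((√(2*π*v2))⁻¹ * rexp (-(z-c*y)^2/(2*v2)))
      = ((√(2*π*v1))⁻¹ * (√(2*π*v2))⁻¹) *
        (rexp (-(y-m1)^2/(2*v1)) * rexp (-(z-c*y)^2/(2*v2))) := by ring
    _ = _ := by rw [hpre, hexp]; ring

lemma key_pdf_eq (m1 z c : ℝ) (v1 v2 : ℝ≥0) (h1 : v1 ≠ 0) (h2 : v2 ≠ 0) (y : ℝ) :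
    gaussianPDFReal m1 v1 y * gaussianPDFReal (c*y) v2 z =
    gaussianPDFReal (c*m1) (⟨c^2, sq_nonneg c⟩*v1+v2) z *
      gaussianPDFReal ((m1*v2+c*z*v1)/(c^2*v1+v2))
        (⟨v1*v2/(c^2*v1+v2), by positivity⟩) y := by
  have h1' : 0 < (v1:ℝ) := by positivity
  have h2' : 0 < (v2:ℝ) := by positivity
  simp only [gaussianPDFReal]
  push_cast
  exact key_pointwise m1 z y c v1 v2 h1' h2'

lemma key_integral (m1 z c : ℝ) (v1 v2 : ℝ≥0) (h1 : v1 ≠ 0) (h2 : v2 ≠ 0) :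
    ∫ y, gaussianPDFReal m1 v1 y * gaussianPDFReal (c*y) v2 z =
    gaussianPDFReal (c*m1) (⟨c^2, sq_nonneg c⟩*v1+v2) z := by
  have h1' : 0 < (v1:ℝ) := by positivity
  have h2' : 0 < (v2:ℝ) := by positivity
  have hvs : (⟨(v1:ℝ)*v2/(c^2*v1+v2), by positivity⟩ : ℝ≥0) ≠ 0 := by
    refine NNReal.coe_ne_zero.mp ?_
    show ((v1:ℝ)*v2/(c^2*v1+v2)) ≠ 0
    have hV : (0:ℝ) < c^2*v1+v2 := by positivity
    positivity
  simp_rw [key_pdf_eq m1 z c v1 v2 h1 h2]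
  rw [integral_const_mul, integral_gaussianPDFReal_eq_one _ hvs, mul_one]

lemma key_lintegral (m1 z c : ℝ) (v1 v2 : ℝ≥0) (h1 : v1 ≠ 0) (h2 : v2 ≠ 0) :
    ∫⁻ y, gaussianPDF m1 v1 y * gaussianPDF (c*y) v2 z =
    gaussianPDF (c*m1) (⟨c^2, sq_nonneg c⟩*v1+v2) z := by
  have hint : Integrable (fun y => gaussianPDFReal m1 v1 y * gaussianPDFReal (c*y) v2 z) := by
    simp_rw [key_pdf_eq m1 z c v1 v2 h1 h2]
    exact (integrable_gaussianPDFReal _ _).const_mul _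
  simp_rw [gaussianPDF, ← ENNReal.ofReal_mul (gaussianPDFReal_nonneg m1 v1 _)]
  rw [← ofReal_integral_eq_lintegral_ofReal hint
    (ae_of_all _ fun y => mul_nonneg (gaussianPDFReal_nonneg _ _ _) (gaussianPDFReal_nonneg _ _ _)),
    key_integral m1 z c v1 v2 h1 h2]

lemma measurable_kernel (c : ℝ) (v2 : ℝ≥0) :
    Measurable (fun y : ℝ => gaussianReal (c*y) v2) := by
  apply Measure.measurable_of_measurable_coe
  intro s hs
  by_cases h2 : v2 = 0
  · subst h2
    simp_rw [gaussianReal_zero_var]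
    simp only [Measure.dirac_apply' _ hs]
    exact (measurable_const.indicator hs).comp (measurable_const.mul measurable_id)
  · simp_rw [gaussianReal_apply _ h2 s]
    apply Measurable.lintegral_prod_right (f := fun y x => gaussianPDF (c*y) v2 x)
    simp only [gaussianPDF, gaussianPDFReal, Function.uncurry]
    apply Measurable.ennreal_ofReal
    fun_prop

lemma gaussian_bind (m1 c : ℝ) (v1 v2 : ℝ≥0) (h1 : v1 ≠ 0) (h2 : v2 ≠ 0) :
    (gaussianReal m1 v1).bind (fun y => gaussianReal (c*y) v2) =
    gaussianReal (c*m1) (⟨c^2, sq_nonneg c⟩*v1+v2) := by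
  have hV : (⟨c^2, sq_nonneg c⟩*v1+v2 : ℝ≥0) ≠ 0 :=
    fun h => h2 (add_eq_zero.mp h).2
  ext s hs
  rw [Measure.bind_apply hs (measurable_kernel c v2).aemeasurable]
  simp_rw [gaussianReal_apply _ h2 s]
  rw [gaussianReal_of_var_ne_zero _ h1,
    lintegral_withDensity_eq_lintegral_mul _ (measurable_gaussianPDF m1 v1)
      (by apply Measurable.lintegral_prod_right (f := fun y x => gaussianPDF (c*y) v2 x)
          simp only [gaussianPDF, gaussianPDFReal, Function.uncurry]
          exact Measurable.ennreal_ofReal (by fun_prop))]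
  simp only [Pi.mul_apply]
  have hswap : ∫⁻ y, gaussianPDF m1 v1 y * ∫⁻ z in s, gaussianPDF (c*y) v2 z
      = ∫⁻ z in s, ∫⁻ y, gaussianPDF m1 v1 y * gaussianPDF (c*y) v2 z := by
    have step1 : ∀ y : ℝ, gaussianPDF m1 v1 y * ∫⁻ z in s, gaussianPDF (c*y) v2 z
        = ∫⁻ z in s, gaussianPDF m1 v1 y * gaussianPDF (c*y) v2 z := fun y =>
      (lintegral_const_mul _ (measurable_gaussianPDF (c*y) v2)).symm
    simp_rw [step1]
    rw [lintegral_lintegral_swap]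
    apply Measurable.aemeasurable
    simp only [gaussianPDF, gaussianPDFReal, Function.uncurry]
    simp only [Function.uncurry_def]
    exact Measurable.mul (M := ℝ≥0∞) (by exact Measurable.ennreal_ofReal (by fun_prop))
      (by exact Measurable.ennreal_ofReal (by fun_prop))
  rw [hswap]
  simp_rw [key_lintegral m1 _ c v1 v2 h1 h2]
  rw [gaussianReal_apply _ hV s]

/-- Composing two Gaussian forward-diffusion transitions yields the Gaussian forward
marginal with multiplied signal coefficients:
`N(√a x, 1 − a)` followed by `y ↦ N(√b y, 1 − b)` equals `N(√(ab) x, 1 − ab)`. -/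
theorem gaussian_forward_compose (x : ℝ) (a b : ℝ≥0) (ha : a ≤ 1) (hb : b ≤ 1) :
    (gaussianReal (Real.sqrt a * x) (1 - a)).bind
      (fun y => gaussianReal (Real.sqrt b * y) (1 - b)) =
    gaussianReal (Real.sqrt (a * b) * x) (1 - a * b) := by
  by_cases ha1 : a = 1
  · subst ha1
    rw [show (1 - 1 : ℝ≥0) = 0 from tsub_self 1, gaussianReal_zero_var,
      Measure.dirac_bind (measurable_kernel (Real.sqrt b) (1-b))]
    norm_num
  by_cases hb1 : b = 1
  · subst hb1
    have : (fun y : ℝ => gaussianReal (Real.sqrt (1:ℝ≥0) * y) (1 - 1)) = Measure.dirac := by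
      funext y
      rw [show (1 - 1 : ℝ≥0) = 0 from tsub_self 1, gaussianReal_zero_var]
      norm_num
    rw [this, Measure.bind_dirac]
    norm_num
  · have h1 : (1 - a : ℝ≥0) ≠ 0 := by
      rw [Ne, tsub_eq_zero_iff_le]
      exact fun h => ha1 (le_antisymm ha h)
    have h2 : (1 - b : ℝ≥0) ≠ 0 := by
      rw [Ne, tsub_eq_zero_iff_le]
      exact fun h => hb1 (le_antisymm hb h)
    have hmean : Real.sqrt b * (Real.sqrt a * x) = Real.sqrt (a*b) * x := by
      rw [Real.sqrt_mul a.coe_nonneg]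
      ring
    have hvar : (⟨(Real.sqrt b)^2, sq_nonneg _⟩ * (1-a) + (1-b) : ℝ≥0) = 1 - a*b := by
      apply NNReal.coe_injective
      push_cast [NNReal.coe_sub ha, NNReal.coe_sub hb, NNReal.coe_sub (mul_le_one' ha hb)]
      change (Real.sqrt b)^2 * ((1-a : ℝ≥0) : ℝ) + _ = _
      rw [NNReal.coe_sub ha, NNReal.coe_one, Real.sq_sqrt b.coe_nonneg]
      ring
    calc ((gaussianReal (Real.sqrt a * x) (1 - a)).bind
          (fun y => gaussianReal (Real.sqrt b * y) (1 - b)))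
        = gaussianReal (Real.sqrt b * (Real.sqrt a * x))
            (⟨(Real.sqrt b)^2, sq_nonneg _⟩ * (1-a) + (1-b)) :=
          gaussian_bind (Real.sqrt a * x) (Real.sqrt b) (1-a) (1-b) h1 h2
      _ = _ := by rw [hmean, hvar]
end

section
/- Let α be a measurable space, π a probability measure on α, x : α, and a, b : ℝ≥0∞ with a ≤ 1 and b ≤ 1. Define the absorbing-mixture kernel K_c(y) := c • Measure.dirac y + (1 − c) • π for c : ℝ≥0∞. Then composing two such transitions multiplies the retention coefficients: (K_a x).bind K_b = (a * b) • Measure.dirac x + (1 − a * b) • π. -/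
open MeasureTheory

open scoped ENNReal

/-- The absorbing-mixture transition kernel of the categorical forward diffusion:
`K_c(y) = c • δ_y + (1 − c) • π`. -/
noncomputable def mixKernel {α : Type*} [MeasurableSpace α] (π : Measure α)
    (c : ℝ≥0∞) (y : α) : Measure α :=
  c • Measure.dirac y + (1 - c) • π

/-- Composing two absorbing-mixture transitions multiplies the retention coefficients:
`(K_a x).bind K_b = (a * b) • δ_x + (1 − a * b) • π`. -/
theorem mixKernel_bind_mixKernel {α : Type*} [MeasurableSpace α]
    (π : Measure α) [IsProbabilityMeasure π] (x : α)
    (a b : ℝ≥0∞) (ha : a ≤ 1) (hb : b ≤ 1) :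
    (mixKernel π a x).bind (mixKernel π b) =
      (a * b) • Measure.dirac x + (1 - a * b) • π := by
  have hK : ∀ c : ℝ≥0∞, ∀ y, ∀ s : Set α, MeasurableSet s →
      mixKernel π c y s = c * s.indicator 1 y + (1 - c) * π s := by
    intro c y s hs
    simp [mixKernel, Measure.dirac_apply' _ hs]
  have hmeas : Measurable (mixKernel π b) := by
    apply Measure.measurable_of_measurable_coe
    intro s hs
    simp only [hK b _ s hs]
    exact ((measurable_one.indicator hs).const_mul b).add_const _
  ext s hs
  rw [Measure.bind_apply hs hmeas.aemeasurable]
  simp only [fun y => hK b y s hs]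
  rw [lintegral_add_right _ (by fun_prop)]
  rw [lintegral_const_mul _ (measurable_one.indicator hs)]
  rw [lintegral_indicator_one hs, lintegral_const]
  simp only [mixKernel, Measure.smul_apply, Measure.add_apply, smul_eq_mul,
    Measure.dirac_apply' _ hs, measure_univ, mul_one]
  have hab : a * b ≤ b := by simpa using mul_le_mul_left ha b
  have h2 : b * (1 - a) = b - a * b := by
    rw [ENNReal.mul_sub (fun _ _ => (hb.trans_lt ENNReal.one_lt_top).ne), mul_one, mul_comm b a]
  rw [add_tsub_cancel_of_le ha, mul_one, mul_add, ← mul_assoc, mul_comm b a, add_assoc,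
    ← mul_assoc, ← add_mul, h2, add_comm (b - a * b), tsub_add_tsub_cancel hb hab]
end
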